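/- The vector γ/γ₀ is a left null vector of the derivative of the discrete Schrödinger potential map (from the proof of Proposition 5.1). Let γ₀, γ : X → ℝ be strictly positive. Then for every δ ∈ ℝ^X, ∑_{e∈X} (γ(e)/γ₀(e)) · [ √(γ₀/γ) ⊙ ( L(γ₀) · (δ/√(γ⊙γ₀)) ) + (δ/γ) ⊙ q̃(γ; γ₀) ](e) = 0, where ⊙, /, √ are componentwise; that is, the vector γ/γ₀ annihilates the image of the derivative of γ ↦ q̃(γ; γ₀) from the left. -/

import Mathlib

open Matrix BigOperators

/-- The geometric-mean weighted Laplacian on the line graph. -/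
noncomputable def lineLap {X : Type*} [Fintype X] [DecidableEq X]
    (A : X → X → Prop) [DecidableRel A] (γ : X → ℝ) : Matrix X X ℝ :=
  Matrix.of fun e f =>
    if e = f then ∑ g ∈ Finset.univ.filter (fun g => A e g), Real.sqrt (γ e * γ g)
    else if A e f then -Real.sqrt (γ e * γ f) else 0

/-- The discrete Schrödinger potential `q̃(γ₁; γ₀) = −(L(γ₀)·s)/s` with
`s = √(γ₁/γ₀)` componentwise, given by the discrete Liouville identity. -/
noncomputable def qtil {X : Type*} [Fintype X] [DecidableEq X]
    (A : X → X → Prop) [DecidableRel A] (γ₀ γ₁ : X → ℝ) : X → ℝ :=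
  fun e => -((lineLap A γ₀).mulVec (fun x => Real.sqrt (γ₁ x / γ₀ x)) e)
      / Real.sqrt (γ₁ e / γ₀ e)

lemma lineLap_symm {X : Type*} [Fintype X] [DecidableEq X]
    (A : X → X → Prop) [DecidableRel A]
    (hsymm : ∀ e f, A e f → A f e) (γ₀ : X → ℝ) :
    (lineLap A γ₀)ᵀ = lineLap A γ₀ := by
  ext e f
  simp only [lineLap, Matrix.transpose_apply, Matrix.of_apply]
  by_cases h : e = f
  · subst h; rfl
  · rw [if_neg h, if_neg (Ne.symm h)]
    by_cases hA : A e f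
    · rw [if_pos hA, if_pos (hsymm _ _ hA), mul_comm]
    · rw [if_neg hA, if_neg (fun hfe => hA (hsymm _ _ hfe))]

/-- The vector `γ/γ₀` is a left null vector of the derivative of the discrete
Schrödinger potential map: for every `δ`,
`∑ₑ (γ(e)/γ₀(e)) [ √(γ₀/γ) ⊙ (L(γ₀)·(δ/√(γ⊙γ₀))) + (δ/γ) ⊙ q̃(γ; γ₀) ](e) = 0`. -/
theorem qtil_left_null_vector
    {X : Type*} [Fintype X] [DecidableEq X]
    (A : X → X → Prop) [DecidableRel A]
    (hsymm : ∀ e f, A e f → A f e) (hirr : ∀ e, ¬ A e e)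
    (γ₀ γ : X → ℝ) (h₀ : ∀ e, 0 < γ₀ e) (hγ : ∀ e, 0 < γ e) :
    ∀ δ : X → ℝ,
      ∑ e, (γ e / γ₀ e) *
        (Real.sqrt (γ₀ e / γ e) *
            ((lineLap A γ₀).mulVec (fun x => δ x / Real.sqrt (γ x * γ₀ x)) e)
          + (δ e / γ e) * qtil A γ₀ γ e) = 0 := by
  intro δ
  set L := lineLap A γ₀ with hL
  set s : X → ℝ := fun x => Real.sqrt (γ x / γ₀ x) with hs
  set u : X → ℝ := fun x => δ x / Real.sqrt (γ x * γ₀ x) with hu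
  have key : ∀ e, (γ e / γ₀ e) *
      (Real.sqrt (γ₀ e / γ e) * (L.mulVec u e) + (δ e / γ e) * qtil A γ₀ γ e)
      = s e * L.mulVec u e - u e * L.mulVec s e := by
    intro e
    have ha := hγ e
    have hb := h₀ e
    have hse : 0 < s e := Real.sqrt_pos.mpr (div_pos ha hb)
    have h1 : γ e / γ₀ e * Real.sqrt (γ₀ e / γ e) = s e := by
      have hprod : s e * Real.sqrt (γ₀ e / γ e) = 1 := by
        rw [hs, ← Real.sqrt_mul (div_nonneg ha.le hb.le)]
        rw [div_mul_div_comm]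
        rw [mul_comm (γ₀ e) (γ e)]
        rw [div_self (by positivity), Real.sqrt_one]
      have hsq : s e * s e = γ e / γ₀ e :=
        Real.mul_self_sqrt (div_nonneg ha.le hb.le)
      calc γ e / γ₀ e * Real.sqrt (γ₀ e / γ e)
          = s e * (s e * Real.sqrt (γ₀ e / γ e)) := by rw [← mul_assoc, hsq]
        _ = s e := by rw [hprod, mul_one]
    have h2 : qtil A γ₀ γ e = -(L.mulVec s e) / s e := rfl
    have h3 : γ e / γ₀ e * (δ e / γ e) / s e = u e := by
      have hbs : γ₀ e * s e = Real.sqrt (γ e * γ₀ e) := by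
        show γ₀ e * Real.sqrt (γ e / γ₀ e) = _
        have hx : γ e * γ₀ e = (γ₀ e) ^ 2 * (γ e / γ₀ e) := by
          rw [mul_div_assoc', eq_div_iff hb.ne']; ring
        rw [hx, Real.sqrt_mul (by positivity), Real.sqrt_sq hb.le]
      show γ e / γ₀ e * (δ e / γ e) / s e = δ e / Real.sqrt (γ e * γ₀ e)
      rw [← hbs]
      field_simp
    rw [h2]
    have : γ e / γ₀ e * (δ e / γ e) * (-(L.mulVec s e) / s e)
        = -(γ e / γ₀ e * (δ e / γ e) / s e * L.mulVec s e) := by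
      field_simp
    calc γ e / γ₀ e *
        (Real.sqrt (γ₀ e / γ e) * L.mulVec u e + δ e / γ e * (-(L.mulVec s e) / s e))
        = (γ e / γ₀ e * Real.sqrt (γ₀ e / γ e)) * L.mulVec u e
          + γ e / γ₀ e * (δ e / γ e) * (-(L.mulVec s e) / s e) := by ring
      _ = s e * L.mulVec u e - u e * L.mulVec s e := by
          rw [h1, this, h3]; ring
  rw [Finset.sum_congr rfl (fun e _ => key e), Finset.sum_sub_distrib]
  have hd1 : ∑ e, s e * L.mulVec u e = s ⬝ᵥ L.mulVec u := rfl
  have hd2 : ∑ e, u e * L.mulVec s e = u ⬝ᵥ L.mulVec s := rfl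
  have hsym' : Lᵀ = L := by rw [hL]; exact lineLap_symm A hsymm γ₀
  rw [hd1, hd2, Matrix.dotProduct_mulVec, ← Matrix.mulVec_transpose,
    hsym', dotProduct_comm, sub_self]
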